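/- For every prime p and all integers r, e with 1 < r < e, there is no polynomial f with integer coefficients such that for all integers z₀, z₁ with 0 ≤ z₀ < p^r, one has f(z₀ + p^r·z₁) ≡ p^r·z₁ (mod p^e). -/

import Mathlib

open Polynomial Finset Nat fwdDiff

/-- Falling-factorial-style polynomial `x(x-1)⋯(x-j+1)`. -/
noncomputable def descPoly (j : ℕ) : Polynomial ℤ :=
  ∏ i ∈ Finset.range j, (X - C (i : ℤ))

lemma descPoly_monic (j : ℕ) : (descPoly j).Monic :=
  monic_prod_of_monic _ _ (fun i _ => monic_X_sub_C _)

lemma descPoly_natDegree (j : ℕ) : (descPoly j).natDegree = j := by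
  rw [descPoly, natDegree_prod_of_monic _ _ (fun i _ => monic_X_sub_C _)]
  simp only [natDegree_X_sub_C, Finset.sum_const, smul_eq_mul, Finset.card_range, mul_one]

lemma descPoly_eval (j : ℕ) (y : ℤ) :
    (descPoly j).eval y = ∏ i ∈ Finset.range j, (y - (i : ℤ)) := by
  simp [descPoly, eval_prod]

lemma fwdDiff_iter_zero_fun (k : ℕ) (x : ℤ) :
    (fwdDiff (1:ℤ))^[k] (fun _ : ℤ => (0:ℤ)) x = 0 := by
  have h := fwdDiff_iter_const_smul (h := (1:ℤ)) (0:ℤ) (fun _ : ℤ => (0:ℤ)) k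
  have h2 := congrFun h x
  rw [show (fun _ : ℤ => (0:ℤ)) = 0 from rfl]
  simpa using h2

lemma fwdDiff_descPoly (j : ℕ) :
    fwdDiff (1:ℤ) (fun y => (descPoly (j+1)).eval y)
      = fun y => ((j:ℤ)+1) * (descPoly j).eval y := by
  funext x
  have h1 : (descPoly (j+1)).eval (x + 1) = (descPoly j).eval x * (x + 1) := by
    rw [descPoly_eval, descPoly_eval, Finset.prod_range_succ']
    push_cast
    ring_nf
  have h2 : (descPoly (j+1)).eval x = (descPoly j).eval x * (x - (j:ℤ)) := by
    rw [descPoly_eval, descPoly_eval, Finset.prod_range_succ]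
  simp only [fwdDiff, h1, h2]
  ring

lemma fwdDiff_iter_descPoly (k : ℕ) : ∀ (j : ℕ) (x : ℤ),
    (fwdDiff (1:ℤ))^[k] (fun y => (descPoly j).eval y) x
      = (j.descFactorial k : ℤ) * (descPoly (j - k)).eval x := by
  induction k with
  | zero => intro j x; simp
  | succ k IH =>
    intro j x
    rw [Function.iterate_succ_apply]
    cases j with
    | zero =>
      have h0 : (fun y : ℤ => (descPoly 0).eval y) = fun _ : ℤ => (1:ℤ) := by
        funext y; simp [descPoly]
      rw [h0]
      have : fwdDiff (1:ℤ) (fun _ : ℤ => (1:ℤ)) = fun _ : ℤ => (0:ℤ) := by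
        funext y; simp [fwdDiff]
      rw [this, fwdDiff_iter_zero_fun]
      simp
    | succ j' =>
      rw [fwdDiff_descPoly j']
      have hsmul : (fun y => ((j':ℤ)+1) * (descPoly j').eval y)
          = ((j':ℤ)+1) • (fun y => (descPoly j').eval y) := by
        funext y; simp [smul_eq_mul]
      rw [hsmul, fwdDiff_iter_const_smul, Pi.smul_apply, smul_eq_mul, IH j' x]
      rw [Nat.succ_descFactorial_succ, Nat.succ_sub_succ]
      push_cast
      ring

/-- `k !` divides the `k`-th finite difference of any integer polynomial. -/
lemma factorial_dvd_fwdDiff_aux : ∀ (n : ℕ) (f : Polynomial ℤ), f.natDegree ≤ n →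
    ∀ (k : ℕ) (x : ℤ), ((k ! : ℕ) : ℤ) ∣ (fwdDiff (1:ℤ))^[k] (fun y => f.eval y) x := by
  intro n
  induction n with
  | zero =>
    intro f hf k x
    have hc : f = C (f.coeff 0) := (Polynomial.eq_C_of_natDegree_le_zero hf)
    have hfun : (fun y : ℤ => f.eval y) = fun _ : ℤ => f.coeff 0 := by
      funext y; rw [hc]; simp
    rw [hfun]
    cases k with
    | zero => simpa using one_dvd _
    | succ k =>
      rw [Function.iterate_succ_apply]
      have : fwdDiff (1:ℤ) (fun _ : ℤ => f.coeff 0) = fun _ : ℤ => (0:ℤ) := by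
        funext y; simp [fwdDiff]
      rw [this, fwdDiff_iter_zero_fun]
      exact dvd_zero _
  | succ n IH =>
    intro f hf k x
    set d := f.natDegree with hd
    set c := f.leadingCoeff with hc
    set g := f - C c * descPoly d with hg
    have hfg : (fun y : ℤ => f.eval y)
        = (fun y => g.eval y) + c • (fun y => (descPoly d).eval y) := by
      funext y
      simp only [hg, Pi.add_apply, Pi.smul_apply, smul_eq_mul, eval_sub, eval_mul, eval_C]
      ring
    have hsplit : (fwdDiff (1:ℤ))^[k] (fun y => f.eval y) x
        = (fwdDiff (1:ℤ))^[k] (fun y => g.eval y) x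
          + c * (fwdDiff (1:ℤ))^[k] (fun y => (descPoly d).eval y) x := by
      rw [hfg, fwdDiff_iter_add, Pi.add_apply, fwdDiff_iter_const_smul, Pi.smul_apply,
        smul_eq_mul]
    rw [hsplit]
    have hD : ((k ! : ℕ) : ℤ) ∣ c * (fwdDiff (1:ℤ))^[k] (fun y => (descPoly d).eval y) x := by
      rw [fwdDiff_iter_descPoly]
      have : ((k ! : ℕ) : ℤ) ∣ ((d.descFactorial k : ℕ) : ℤ) :=
        Int.natCast_dvd_natCast.mpr (Nat.factorial_dvd_descFactorial d k)
      exact Dvd.dvd.mul_left (this.mul_right _) c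
    refine dvd_add ?_ hD
    by_cases hg0 : g = 0
    · rw [hg0]
      have : (fun y : ℤ => (0 : Polynomial ℤ).eval y) = fun _ : ℤ => (0:ℤ) := by
        funext y; simp
      rw [this, fwdDiff_iter_zero_fun]
      exact dvd_zero _
    · have hf0 : f ≠ 0 := by
        intro h0
        apply hg0
        rw [hg, h0]
        simp [hc, h0]
      have hc0 : c ≠ 0 := leadingCoeff_ne_zero.mpr hf0
      have hDne : descPoly d ≠ 0 := (descPoly_monic d).ne_zero
      have hdegD : (descPoly d).degree = (d : WithBot ℕ) := by
        rw [degree_eq_natDegree hDne, descPoly_natDegree]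
      have hdeg_eq : f.degree = (C c * descPoly d).degree := by
        rw [degree_mul, degree_C hc0, hdegD, degree_eq_natDegree hf0]
        simp
        exact hd.symm
      have hlc_eq : f.leadingCoeff = (C c * descPoly d).leadingCoeff := by
        rw [leadingCoeff_mul, leadingCoeff_C, (descPoly_monic d).leadingCoeff, mul_one]
      have hlt : g.degree < f.degree := degree_sub_lt hdeg_eq hf0 hlc_eq
      have hnd : g.natDegree < f.natDegree := natDegree_lt_natDegree hg0 hlt
      have : g.natDegree ≤ n := by omega
      exact IH g this k x

lemma factorial_dvd_fwdDiff (f : Polynomial ℤ) (k : ℕ) (x : ℤ) :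
    ((k ! : ℕ) : ℤ) ∣ (fwdDiff (1:ℤ))^[k] (fun y => f.eval y) x :=
  factorial_dvd_fwdDiff_aux f.natDegree f le_rfl k x

/-- No polynomial removes the r lowest base-p digits mod p^e when 1 < r < e. -/
theorem no_digit_removal_polynomial (p : ℕ) (hp : p.Prime) (r e : ℕ)
    (hr : 1 < r) (hre : r < e) :
    ¬ ∃ f : Polynomial ℤ, ∀ z₀ z₁ : ℤ, 0 ≤ z₀ → z₀ < (p : ℤ) ^ r →
      f.eval (z₀ + (p : ℤ) ^ r * z₁) ≡ (p : ℤ) ^ r * z₁ [ZMOD (p : ℤ) ^ e] := by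
  rintro ⟨f, hf⟩
  have hp1 : 1 < p := hp.one_lt
  set N : ℕ := p ^ r with hN
  -- p^(r+1) divides N!
  have hdvdfac : p ^ (r + 1) ∣ N ! := by
    have hpN : p < N := by
      calc p = p ^ 1 := (pow_one p).symm
      _ < p ^ r := Nat.pow_lt_pow_right hp1 hr
    have hsub : ({p, N} : Finset ℕ) ⊆ Finset.Ico 1 (N + 1) := by
      intro i hi
      simp only [Finset.mem_insert, Finset.mem_singleton] at hi
      rcases hi with rfl | rfl <;> simp [Finset.mem_Ico] <;> omega
    have hprod : (∏ i ∈ ({p, N} : Finset ℕ), i) ∣ ∏ i ∈ Finset.Ico 1 (N + 1), i :=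
      Finset.prod_dvd_prod_of_subset _ _ _ hsub
    rw [Finset.prod_Ico_id_eq_factorial] at hprod
    rwa [Finset.prod_pair (by omega : p ≠ N), hN, ← pow_succ'] at hprod
  -- The key difference value
  set S : ℤ := (fwdDiff (1:ℤ))^[N] (fun y => f.eval y) 0 with hS
  have hfacS : ((N ! : ℕ) : ℤ) ∣ S := factorial_dvd_fwdDiff f N 0
  have hdvdS : (p : ℤ) ^ (r + 1) ∣ S := by
    refine dvd_trans ?_ hfacS
    have := Int.natCast_dvd_natCast.mpr hdvdfac
    push_cast at this
    exact this
  -- p^(r+1) ∣ p^e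
  have hre1 : (p : ℤ) ^ (r + 1) ∣ (p : ℤ) ^ e := pow_dvd_pow _ (by omega)
  -- f(k) ≡ 0 mod p^e for 0 ≤ k < N
  have hzero : ∀ k : ℕ, k < N → (p : ℤ) ^ e ∣ f.eval (k : ℤ) := by
    intro k hk
    have hklt : (k : ℤ) < (p : ℤ) ^ r := by
      have : ((k : ℕ) : ℤ) < ((N : ℕ) : ℤ) := Int.ofNat_lt.mpr hk
      calc (k : ℤ) < ((N : ℕ) : ℤ) := this
      _ = (p : ℤ) ^ r := by push_cast [hN]; ring
    have h := (hf (k : ℤ) 0 (by positivity) hklt).dvd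
    simp only [mul_zero, add_zero, zero_sub, dvd_neg] at h
    exact h
  -- f(N) ≡ p^r mod p^e
  have hN' : (p : ℤ) ^ e ∣ (p : ℤ) ^ r - f.eval ((N : ℕ) : ℤ) := by
    have h := hf 0 1 le_rfl (by positivity)
    have h2 := h.dvd
    simp only [zero_add, mul_one] at h2
    have : ((N : ℕ) : ℤ) = (p : ℤ) ^ r := by push_cast [hN]; ring
    rwa [this]
  -- Expand S as a sum
  have hsum : S = ∑ k ∈ Finset.range (N + 1),
      ((-1 : ℤ) ^ (N - k) * (N.choose k : ℤ)) * f.eval (k : ℤ) := by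
    rw [hS, fwdDiff_iter_eq_sum_shift]
    refine Finset.sum_congr rfl fun k hk => ?_
    simp [smul_eq_mul]
  -- p^(r+1) ∣ S - p^r
  have hkey : (p : ℤ) ^ (r + 1) ∣ S - (p : ℤ) ^ r := by
    rw [hsum, Finset.sum_range_succ]
    have hlast : ((-1 : ℤ) ^ (N - N) * (N.choose N : ℤ)) * f.eval ((N : ℕ) : ℤ)
        = f.eval ((N : ℕ) : ℤ) := by simp
    rw [hlast]
    have h1 : (p : ℤ) ^ (r + 1) ∣ ∑ k ∈ Finset.range N,
        ((-1 : ℤ) ^ (N - k) * (N.choose k : ℤ)) * f.eval (k : ℤ) := by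
      refine Finset.dvd_sum fun k hk => ?_
      refine Dvd.dvd.mul_left ?_ _
      exact dvd_trans hre1 (hzero k (Finset.mem_range.mp hk))
    have h2 : (p : ℤ) ^ (r + 1) ∣ f.eval ((N : ℕ) : ℤ) - (p : ℤ) ^ r := by
      have hd := dvd_trans hre1 hN'
      have h3 : f.eval ((N : ℕ) : ℤ) - (p : ℤ) ^ r
          = -((p : ℤ) ^ r - f.eval ((N : ℕ) : ℤ)) := by ring
      rw [h3]
      exact hd.neg_right
    have := dvd_add h1 h2
    have h4 : (∑ k ∈ Finset.range N, ((-1 : ℤ) ^ (N - k) * (N.choose k : ℤ)) * f.eval (k : ℤ))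
        + (f.eval ((N : ℕ) : ℤ) - (p : ℤ) ^ r)
        = (∑ k ∈ Finset.range N, ((-1 : ℤ) ^ (N - k) * (N.choose k : ℤ)) * f.eval (k : ℤ)
          + f.eval ((N : ℕ) : ℤ)) - (p : ℤ) ^ r := by ring
    rwa [h4] at this
  -- Conclude: p^(r+1) ∣ p^r, contradiction
  have hfinal : (p : ℤ) ^ (r + 1) ∣ (p : ℤ) ^ r := by
    have := dvd_sub hdvdS hkey
    simpa using this
  have hple : (p : ℤ) ^ (r + 1) ≤ (p : ℤ) ^ r := by
    refine Int.le_of_dvd ?_ hfinal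
    positivity
  have : (p : ℤ) ^ r < (p : ℤ) ^ (r + 1) := by
    have : (1 : ℤ) < p := by exact_mod_cast hp1
    exact pow_lt_pow_right₀ this (by omega)
  omega
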